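/- Let d ≥ 1, β > d and c > 0, and let q : ℝ^d → ℝ be a bounded C¹ function with bounded gradient satisfying max(|q(x)|, |∇q(x)|) ≤ c·|x|^{−β} for all x with |x| ≥ 1. Fix a real m ≥ 1 and define ρ : ℝ^d → ℝ by ρ(x) := ∫_{Λ_m} q(x − y) dy. Then ρ is C¹, and there exists a constant C > 0, depending only on c, β and d, such that for every x ∈ ℝ^d with dist(x, Λ_m) ≥ 1, max(|ρ(x)|, |∇ρ(x)|) ≤ C·dist(x, Λ_m)^{d−β}. -/

import Mathlib

open MeasureTheory Filter Set Topology Metric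
open scoped ENNReal NNReal

noncomputable section

/-- `ℝ^d` as Euclidean space. -/
abbrev Euc (d : ℕ) := EuclideanSpace ℝ (Fin d)

/-- The closed unit cube `B_v = v + [0,1]^d`. -/
def unitCube (d : ℕ) (v : Fin d → ℤ) : Set (Euc d) :=
  {x | ∀ i, (v i : ℝ) ≤ x i ∧ x i ≤ (v i : ℝ) + 1}

/-- The open face of the cube `B_v` described by `s`: `some false ↦ {v i}`,
`some true ↦ {v i + 1}`, `none ↦ (v i, v i + 1)`. -/
def openFace (d : ℕ) (v : Fin d → ℤ) (s : Fin d → Option Bool) : Set (Euc d) :=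
  {x | ∀ i, match s i with
    | some false => x i = (v i : ℝ)
    | some true => x i = (v i : ℝ) + 1
    | none => (v i : ℝ) < x i ∧ x i < (v i : ℝ) + 1}

/-- `x` is a stratified critical point of `h` in the cube `B_v` at level `ℓ`. -/
def IsStratCrit (d : ℕ) (h : Euc d → ℝ) (v : Fin d → ℤ) (ℓ : ℝ) (x : Euc d) : Prop :=
  ∃ s : Fin d → Option Bool, x ∈ openFace d v s ∧ h x = ℓ ∧
    ∀ i, s i = none → fderiv ℝ h x (EuclideanSpace.single i 1) = 0

/-- `(g,p)` is locally topologically stable on `B_v` at level `ℓ`. -/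
def LocStable (d : ℕ) (g p : Euc d → ℝ) (v : Fin d → ℤ) (ℓ : ℝ) : Prop :=
  ∀ t ∈ Set.Icc (0:ℝ) 1, ∀ x : Euc d, ¬ IsStratCrit d (fun y => g y + t * p y) v ℓ x

/-- Union of the unbounded connected components of `A`. -/
def unboundedPart (d : ℕ) (A : Set (Euc d)) : Set (Euc d) :=
  {x | x ∈ A ∧ ¬ Bornology.IsBounded (connectedComponentIn A x)}

/-- Union of the bounded connected components of `A`. -/
def boundedPart (d : ℕ) (A : Set (Euc d)) : Set (Euc d) :=
  A \ unboundedPart d A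

/-- The locally unstable set `U_Loc(g,p)` at level `ℓ`. -/
def ULoc (d : ℕ) (g p : Euc d → ℝ) (ℓ : ℝ) : Set (Fin d → ℤ) :=
  {w | ¬ LocStable d g p w ℓ}

/-- The finite-range unstable set `U_FR(g,p)` at level `ℓ`. -/
def UFR (d : ℕ) (g p : Euc d → ℝ) (ℓ : ℝ) : Set (Fin d → ℤ) :=
  ULoc d g p ℓ ∪
    {w | ∃ u ∈ ULoc d g p ℓ,
      (∃ x ∈ unitCube d w, ∃ y ∈ unitCube d u,
        JoinedIn (boundedPart d {z | ℓ ≤ g z}) x y) ∨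
      (∃ x ∈ unitCube d w, ∃ y ∈ unitCube d u,
        JoinedIn (boundedPart d {z | ℓ ≤ g z + p z}) x y)}

/-- `A` has at most finitely many connected components. -/
def FinitelyManyComponents (d : ℕ) (A : Set (Euc d)) : Prop :=
  {C : Set (Euc d) | ∃ x ∈ A, C = connectedComponentIn A x}.Finite

/-- `H` is a stratified isotopy of the union `D` of the cubes `B_{v i}`:
it is continuous on `D × [0,1]`, each time slice is a homeomorphism of `D`
onto itself, and each stratum (open face) is preserved at every time. -/
def IsStratIsotopy (d n : ℕ) (v : Fin n → Fin d → ℤ) (H : Euc d → ℝ → Euc d) : Prop :=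
  ContinuousOn (fun q : Euc d × ℝ => H q.1 q.2) ((⋃ i, unitCube d (v i)) ×ˢ Set.Icc 0 1) ∧
  (∀ t ∈ Set.Icc (0:ℝ) 1,
    ∃ e : (⋃ i, unitCube d (v i)) ≃ₜ (⋃ i, unitCube d (v i)),
      ∀ x : (⋃ i, unitCube d (v i)), (e x : Euc d) = H x t) ∧
  (∀ t ∈ Set.Icc (0:ℝ) 1, ∀ i : Fin n, ∀ s : Fin d → Option Bool,
    (fun x => H x t) '' openFace d (v i) s = openFace d (v i) s)

/-- The cube `Λ_r = [-r,r]^d`. -/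
def bigCube (d : ℕ) (r : ℝ) : Set (Euc d) :=
  {x | ∀ i, |x i| ≤ r}

lemma bigCube_isClosed (d : ℕ) (m : ℝ) : IsClosed (bigCube d m) := by
  have h : bigCube d m = ⋂ i, (fun x : Euc d => |x i|) ⁻¹' Iic m := by
    ext x; simp [bigCube, Set.mem_iInter]
  rw [h]
  exact isClosed_iInter fun i =>
    IsClosed.preimage (continuous_abs.comp (EuclideanSpace.proj i).continuous) isClosed_Iic

lemma bigCube_isCompact (d : ℕ) (m : ℝ) : IsCompact (bigCube d m) := by
  refine isCompact_of_isClosed_isBounded (bigCube_isClosed d m) ?_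
  refine (Metric.isBounded_iff_subset_closedBall 0).2 ⟨Real.sqrt (d * m ^ 2), fun x hx => ?_⟩
  simp only [Metric.mem_closedBall, dist_zero_right]
  rw [EuclideanSpace.norm_eq]
  apply Real.sqrt_le_sqrt
  calc ∑ i, ‖x i‖ ^ 2 ≤ ∑ _i : Fin d, m ^ 2 := by
        refine Finset.sum_le_sum fun i _ => ?_
        rw [Real.norm_eq_abs, ← sq_abs m]
        exact pow_le_pow_left₀ (abs_nonneg _) ((hx i).trans (le_abs_self m)) 2
    _ = d * m ^ 2 := by simp [Finset.sum_const, nsmul_eq_mul]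

lemma norm_gradient_eq_norm_fderiv (d : ℕ) (f : Euc d → ℝ) (x : Euc d) :
    ‖gradient f x‖ = ‖fderiv ℝ f x‖ := by
  rw [gradient]
  exact LinearIsometryEquiv.norm_map _ _

lemma cube_integral_decay (d : ℕ) (hd : 1 ≤ d) (β : ℝ) (hβ : (d : ℝ) < β) {m : ℝ} {x : Euc d}
    {D : ℝ} (hD1 : 1 ≤ D) (hdist : ∀ y ∈ bigCube d m, D ≤ ‖x - y‖) :
    ∫ y in bigCube d m, ‖x - y‖ ^ (-β) ≤
      ((d : ℝ) * (volume (ball (0 : Euc d) 1)).toReal / (β - d)) * D ^ ((d : ℝ) - β) := by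
  haveI : Nonempty (Fin d) := Fin.pos_iff_nonempty.mp hd
  haveI : Nontrivial (Euc d) := inferInstanceAs (Nontrivial (PiLp 2 fun _ : Fin d => ℝ))
  have hD0 : (0 : ℝ) < D := lt_of_lt_of_le one_pos hD1
  set f1 : ℝ → ℝ := fun r => if D ≤ r then r ^ (-β) else 0 with hf1
  have hf1nonneg : ∀ r, 0 ≤ f1 r := by
    intro r; simp only [hf1]; split
    · exact Real.rpow_nonneg (le_trans hD0.le ‹_›) _
    · exact le_refl 0
  set A : Set (Euc d) := {z | D ≤ ‖z‖} with hA
  have hAclosed : IsClosed A := isClosed_le continuous_const continuous_norm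
  have hcomp : ∀ z : Euc d, f1 ‖z‖ = A.indicator (fun z => ‖z‖ ^ (-β)) z := by
    intro z
    by_cases hz : D ≤ ‖z‖
    · simp [hf1, hA, hz, Set.indicator_of_mem, Set.mem_setOf_eq]
    · simp [hf1, hA, hz, Set.indicator_of_notMem, Set.mem_setOf_eq]
  -- integrability
  have hmeas : AEStronglyMeasurable (fun z : Euc d => f1 ‖z‖) volume := by
    rw [show (fun z : Euc d => f1 ‖z‖) = A.indicator (fun z => ‖z‖ ^ (-β)) from funext hcomp]
    refine (aestronglyMeasurable_indicator_iff hAclosed.measurableSet).mpr ?_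
    refine ContinuousOn.aestronglyMeasurable ?_ hAclosed.measurableSet
    refine ContinuousOn.rpow_const continuous_norm.continuousOn fun z hz => Or.inl ?_
    exact ne_of_gt (lt_of_lt_of_le hD0 hz)
  have hint : Integrable (fun z : Euc d => f1 ‖z‖) := by
    have hfr : (Module.finrank ℝ (Euc d) : ℝ) < β := by
      simpa [finrank_euclideanSpace_fin] using hβ
    have h2 : Integrable (fun z : Euc d => (2 : ℝ) ^ β * (1 + ‖z‖) ^ (-β)) :=
      (integrable_one_add_norm hfr).const_mul _
    refine h2.mono' hmeas (ae_of_all _ fun z => ?_)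
    rw [Real.norm_eq_abs, abs_of_nonneg (hf1nonneg _)]
    by_cases hz : D ≤ ‖z‖
    · simp only [hf1, if_pos hz]
      have hz1 : (1 : ℝ) ≤ ‖z‖ := le_trans hD1 hz
      have h12 : (1 : ℝ) + ‖z‖ ≤ 2 * ‖z‖ := by linarith
      have hle : ((1 : ℝ) + ‖z‖) ^ (-β) ≥ (2 * ‖z‖) ^ (-β) :=
        Real.rpow_le_rpow_of_nonpos (by positivity) h12 (by linarith)
      have hmul : ((2 : ℝ) * ‖z‖) ^ (-β) = 2 ^ (-β) * ‖z‖ ^ (-β) :=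
        Real.mul_rpow (by norm_num) (norm_nonneg _)
      have h2β : (2 : ℝ) ^ β * 2 ^ (-β) = 1 := by
        rw [← Real.rpow_add (by norm_num)]; simp
      calc ‖z‖ ^ (-β) = 2 ^ β * (2 ^ (-β) * ‖z‖ ^ (-β)) := by
            rw [← mul_assoc, h2β, one_mul]
        _ = 2 ^ β * (2 * ‖z‖) ^ (-β) := by rw [hmul]
        _ ≤ 2 ^ β * (1 + ‖z‖) ^ (-β) := by
            refine mul_le_mul_of_nonneg_left hle (by positivity)
    · simp only [hf1, if_neg hz]; positivity
  -- value
  have hval : ∫ z : Euc d, f1 ‖z‖ =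
      ((d : ℝ) * (volume (ball (0 : Euc d) 1)).toReal / (β - d)) * D ^ ((d : ℝ) - β) := by
    rw [MeasureTheory.integral_fun_norm_addHaar volume f1]
    have hdim : Module.finrank ℝ (Euc d) = d := finrank_euclideanSpace_fin
    rw [hdim]
    have h1d : ∫ y in Ioi (0 : ℝ), y ^ (d - 1) • f1 y = D ^ ((d : ℝ) - β) / (β - d) := by
      have heq : ∀ y ∈ Ioi (0 : ℝ),
          y ^ (d - 1) • f1 y = (Ici D).indicator (fun y => y ^ ((d : ℝ) - 1 - β)) y := by
        intro y hy
        by_cases hDy : D ≤ y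
        · rw [Set.indicator_of_mem (show y ∈ Ici D from hDy)]
          have hy0 : (0 : ℝ) < y := hy
          simp only [hf1, if_pos hDy, smul_eq_mul]
          rw [← Real.rpow_natCast y (d - 1), ← Real.rpow_add hy0]
          congr 1
          have : ((d - 1 : ℕ) : ℝ) = (d : ℝ) - 1 := by
            push_cast [Nat.cast_sub hd]; ring
          rw [this]; ring
        · rw [Set.indicator_of_notMem (show y ∉ Ici D from hDy)]
          simp [hf1, if_neg hDy]
      rw [setIntegral_congr_fun measurableSet_Ioi heq,
        setIntegral_indicator measurableSet_Ici,
        show Ioi (0:ℝ) ∩ Ici D = Ici D from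
          Set.inter_eq_self_of_subset_right fun y (hy : y ∈ Ici D) => lt_of_lt_of_le hD0 hy,
        integral_Ici_eq_integral_Ioi,
        integral_Ioi_rpow_of_lt (by linarith) hD0]
      have he : (d : ℝ) - 1 - β + 1 = (d : ℝ) - β := by ring
      rw [he]
      have hne : (d : ℝ) - β ≠ 0 := by linarith
      have hne' : β - (d : ℝ) ≠ 0 := by linarith
      field_simp
      ring
    rw [h1d, nsmul_eq_mul, smul_eq_mul]
    field_simp
    simp only [measureReal_def]
  -- chain
  calc ∫ y in bigCube d m, ‖x - y‖ ^ (-β) = ∫ y in bigCube d m, f1 ‖x - y‖ := by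
        refine setIntegral_congr_fun (bigCube_isClosed d m).measurableSet fun y hy => ?_
        simp [hf1, if_pos (hdist y hy)]
    _ ≤ ∫ y, f1 ‖x - y‖ := by
        refine setIntegral_le_integral (hint.comp_sub_left x) (ae_of_all _ fun y => ?_)
        exact hf1nonneg _
    _ = ∫ z : Euc d, f1 ‖z‖ := integral_sub_left_eq_self (fun z => f1 ‖z‖) volume x
    _ = _ := hval


set_option maxHeartbeats 1000000 in
/-- If `q` is a bounded `C¹` function with bounded gradient decaying like
`|x|^{−β}` (β > d), then `ρ := q ∗ 1_{Λ_m}` is `C¹` and, with a constant `C` depending only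
on `c`, `β` and `d`, satisfies `max(|ρ(x)|, |∇ρ(x)|) ≤ C·dist(x, Λ_m)^{d−β}` whenever
`dist(x, Λ_m) ≥ 1`. -/
theorem statement_16 (d : ℕ) (hd : 1 ≤ d) (β c : ℝ) (hβ : (d : ℝ) < β) (hc : 0 < c) :
    ∃ C : ℝ, 0 < C ∧
      ∀ (q : Euc d → ℝ) (m : ℝ), 1 ≤ m →
        ContDiff ℝ 1 q →
        (∃ M : ℝ, ∀ x : Euc d, |q x| ≤ M ∧ ‖gradient q x‖ ≤ M) →
        (∀ x : Euc d, 1 ≤ ‖x‖ → max |q x| ‖gradient q x‖ ≤ c * ‖x‖ ^ (-β)) →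
        ContDiff ℝ 1 (fun x : Euc d => ∫ y in bigCube d m, q (x - y)) ∧
        ∀ x : Euc d, 1 ≤ Metric.infDist x (bigCube d m) →
          max |∫ y in bigCube d m, q (x - y)|
              ‖gradient (fun z : Euc d => ∫ y in bigCube d m, q (z - y)) x‖ ≤
            C * Metric.infDist x (bigCube d m) ^ ((d : ℝ) - β) := by
  set K : ℝ := (d : ℝ) * (volume (ball (0 : Euc d) 1)).toReal / (β - d) with hK
  have hvolpos : 0 < (volume (ball (0 : Euc d) 1)).toReal :=
    ENNReal.toReal_pos (measure_ball_pos volume (0 : Euc d) one_pos).ne' measure_ball_lt_top.ne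
  have hKpos : 0 < K := by
    apply div_pos (mul_pos (by exact_mod_cast lt_of_lt_of_le one_pos hd) hvolpos) (by linarith)
  refine ⟨c * K, mul_pos hc hKpos, ?_⟩
  intro q m hm hq hbdd hdecay
  obtain ⟨M, hM⟩ := hbdd
  set S : Set (Euc d) := bigCube d m with hS
  have hSmeas : MeasurableSet S := (bigCube_isClosed d m).measurableSet
  have hSc : IsCompact S := bigCube_isCompact d m
  have μS : volume S < ⊤ := hSc.measure_lt_top
  have hqc : Continuous q := hq.continuous
  have hdqc : Continuous (fderiv ℝ q) := hq.continuous_fderiv one_ne_zero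
  have hfd : ∀ z : Euc d, ‖fderiv ℝ q z‖ ≤ M := fun z => by
    rw [← norm_gradient_eq_norm_fderiv]; exact (hM z).2
  -- derivative under the integral sign
  have hρ : ∀ x₀ : Euc d, HasFDerivAt (fun x => ∫ y in S, q (x - y))
      (∫ y in S, fderiv ℝ q (x₀ - y)) x₀ := by
    intro x₀
    have h1 : ∀ᶠ x' in 𝓝 x₀, AEStronglyMeasurable (fun y : Euc d => q (x' - y))
        (volume.restrict S) := Eventually.of_forall fun x =>
      (hqc.comp (continuous_const.sub continuous_id)).aestronglyMeasurable
    have h2 : Integrable (fun y : Euc d => q (x₀ - y)) (volume.restrict S) :=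
      ((hqc.comp (continuous_const.sub continuous_id)).continuousOn).integrableOn_compact hSc
    have h3 : AEStronglyMeasurable (fun y : Euc d => fderiv ℝ q (x₀ - y))
        (volume.restrict S) :=
      (hdqc.comp (continuous_const.sub continuous_id)).aestronglyMeasurable
    have h4 : ∀ᵐ y ∂(volume.restrict S), ∀ x ∈ ball x₀ 1,
        ‖fderiv ℝ q (x - y)‖ ≤ M := ae_of_all _ fun y x _ => hfd _
    have h5 : Integrable (fun _ : Euc d => M) (volume.restrict S) :=
      integrableOn_const μS.ne
    have h6 : ∀ᵐ y ∂(volume.restrict S), ∀ x ∈ ball x₀ 1,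
        HasFDerivAt (fun x' => q (x' - y)) (fderiv ℝ q (x - y)) x := by
      refine ae_of_all _ fun y x _ => ?_
      have h := (hq.differentiable one_ne_zero (x - y)).hasFDerivAt
      have h2' : HasFDerivAt (fun x : Euc d => x - y) (ContinuousLinearMap.id ℝ (Euc d)) x :=
        (hasFDerivAt_id x).sub_const y
      have h3' := h.comp x h2'
      rw [ContinuousLinearMap.comp_id] at h3'
      exact h3'
    exact hasFDerivAt_integral_of_dominated_of_fderiv_le (μ := volume.restrict S)
      (F := fun x y => q (x - y)) (x₀ := x₀) (bound := fun _ => M)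
      (F' := fun x y => fderiv ℝ q (x - y)) (ball_mem_nhds x₀ one_pos) h1 h2 h3 h4 h5 h6
  have hρdiff : Differentiable ℝ (fun x : Euc d => ∫ y in S, q (x - y)) :=
    fun x => (hρ x).differentiableAt
  have hfderivρ : ∀ x : Euc d,
      fderiv ℝ (fun x => ∫ y in S, q (x - y)) x = ∫ y in S, fderiv ℝ q (x - y) :=
    fun x => (hρ x).fderiv
  constructor
  · refine contDiff_one_iff_fderiv.mpr ⟨hρdiff, ?_⟩
    have hcont : Continuous fun x : Euc d => ∫ y in S, fderiv ℝ q (x - y) := by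
      apply continuous_of_dominated (bound := fun _ => M)
      · exact fun x => (hdqc.comp (continuous_const.sub continuous_id)).aestronglyMeasurable
      · exact fun x => ae_of_all _ fun y => hfd _
      · exact integrableOn_const μS.ne
      · exact ae_of_all _ fun y => hdqc.comp (continuous_id.sub continuous_const)
    exact hcont.congr fun x => (hfderivρ x).symm
  · intro x hx
    set D : ℝ := Metric.infDist x S with hD
    have hxS : ∀ y ∈ S, D ≤ ‖x - y‖ := fun y hy => by
      rw [← dist_eq_norm]; exact Metric.infDist_le_dist_of_mem hy
    have h1S : ∀ y ∈ S, (1 : ℝ) ≤ ‖x - y‖ := fun y hy => le_trans hx (hxS y hy)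
    have key : ∫ y in S, ‖x - y‖ ^ (-β) ≤ K * D ^ ((d : ℝ) - β) :=
      cube_integral_decay d hd β hβ hx hxS
    have hIntr : IntegrableOn (fun y : Euc d => ‖x - y‖ ^ (-β)) S := by
      refine ContinuousOn.integrableOn_compact hSc ?_
      refine ContinuousOn.rpow_const ((continuous_const.sub continuous_id).norm.continuousOn)
        fun y hy => Or.inl (ne_of_gt (lt_of_lt_of_le one_pos (h1S y hy)))
    have hIntc : Integrable (fun y : Euc d => c * ‖x - y‖ ^ (-β)) (volume.restrict S) :=
      hIntr.const_mul c
    have hchain : ∫ y in S, c * ‖x - y‖ ^ (-β) ≤ c * K * D ^ ((d : ℝ) - β) := by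
      rw [integral_const_mul, mul_assoc]
      exact mul_le_mul_of_nonneg_left key hc.le
    refine max_le ?_ ?_
    · calc |∫ y in S, q (x - y)| ≤ ∫ y in S, c * ‖x - y‖ ^ (-β) := by
            rw [← Real.norm_eq_abs]
            refine norm_integral_le_of_norm_le hIntc ?_
            refine (ae_restrict_iff' hSmeas).2 (ae_of_all _ fun y hy => ?_)
            rw [Real.norm_eq_abs]
            exact le_trans (le_max_left _ _) (hdecay (x - y) (h1S y hy))
        _ ≤ c * K * D ^ ((d : ℝ) - β) := hchain
    · have hgr : ‖gradient (fun z : Euc d => ∫ y in S, q (z - y)) x‖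
          = ‖∫ y in S, fderiv ℝ q (x - y)‖ := by
        rw [norm_gradient_eq_norm_fderiv, hfderivρ x]
      rw [hgr]
      calc ‖∫ y in S, fderiv ℝ q (x - y)‖ ≤ ∫ y in S, c * ‖x - y‖ ^ (-β) := by
            refine norm_integral_le_of_norm_le hIntc ?_
            refine (ae_restrict_iff' hSmeas).2 (ae_of_all _ fun y hy => ?_)
            rw [norm_gradient_eq_norm_fderiv] at *
            calc ‖fderiv ℝ q (x - y)‖ = ‖gradient q (x - y)‖ :=
                  (norm_gradient_eq_norm_fderiv d q (x - y)).symm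
              _ ≤ max |q (x - y)| ‖gradient q (x - y)‖ := le_max_right _ _
              _ ≤ c * ‖x - y‖ ^ (-β) := hdecay (x - y) (h1S y hy)
        _ ≤ c * K * D ^ ((d : ℝ) - β) := hchain

end
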